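/- Let α ∈ (0,1], t > 0, and let (μ_t^α) be a family of probability measures on [0,∞) whose Laplace transforms satisfy ∫_0^∞ e^{-xs} μ_t^α(ds) = e^{-t x^α} for all x ≥ 0. Then for every r > 0, ∫_0^∞ s^{-r} μ_t^α(ds) = Γ(r/α) / (α Γ(r)) · t^{-r/α}. -/

import Mathlib

open MeasureTheory Real Set

theorem stmt_1 (α t : ℝ) (hα : 0 < α) (hα1 : α ≤ 1) (ht : 0 < t)
    (μ : Measure ℝ) [IsProbabilityMeasure μ] (hsupp : μ (Ici (0:ℝ)) = 1)
    (hlaplace : ∀ x : ℝ, 0 ≤ x →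
      ∫ s in Ici (0:ℝ), Real.exp (-(x * s)) ∂μ = Real.exp (-(t * x ^ α)))
    (r : ℝ) (hr : 0 < r) :
    ∫ s in Ici (0:ℝ), s ^ (-r) ∂μ =
      Real.Gamma (r / α) / (α * Real.Gamma r) * t ^ (-(r / α)) := by
  have hΓr : 0 < Real.Gamma r := Real.Gamma_pos_of_pos hr
  have hΓrα : 0 < Real.Gamma (r / α) := Real.Gamma_pos_of_pos (div_pos hr hα)
  -- integrability of the Laplace kernel on nonneg sets
  have hint : ∀ x : ℝ, 0 ≤ x → ∀ A : Set ℝ, A ⊆ Ici 0 → MeasurableSet A →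
      IntegrableOn (fun s => Real.exp (-(x * s))) A μ := by
    intro x hx A hA hAm
    refine Integrable.mono' (integrable_const 1)
      ((Real.continuous_exp.comp (continuous_const.mul continuous_id).neg).aestronglyMeasurable) ?_
    filter_upwards [ae_restrict_mem hAm] with s hs
    rw [Real.norm_eq_abs, abs_of_pos (Real.exp_pos _)]
    exact Real.exp_le_one_iff.mpr (neg_nonpos.mpr (mul_nonneg hx (hA hs)))
  -- μ has no atom at 0
  have hμ0 : μ {(0:ℝ)} = 0 := by
    by_contra h0
    have hpos : 0 < (μ {(0:ℝ)}).toReal := ENNReal.toReal_pos h0 (measure_ne_top μ _)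
    have hbound : ∀ x : ℝ, 0 ≤ x → (μ {(0:ℝ)}).toReal ≤ Real.exp (-(t * x ^ α)) := by
      intro x hx
      rw [← hlaplace x hx]
      calc (μ {(0:ℝ)}).toReal = ∫ _ in {(0:ℝ)}, (1:ℝ) ∂μ := by
            rw [setIntegral_const]; simp; rfl
        _ = ∫ s in {(0:ℝ)}, Real.exp (-(x * s)) ∂μ :=
            setIntegral_congr_fun (measurableSet_singleton 0)
              (fun s hs => by rw [Set.mem_singleton_iff.mp hs]; simp)
        _ ≤ ∫ s in Ici (0:ℝ), Real.exp (-(x * s)) ∂μ := by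
            refine setIntegral_mono_set (hint x hx _ Subset.rfl measurableSet_Ici)
              (Filter.Eventually.of_forall fun s => (Real.exp_pos _).le) ?_
            exact HasSubset.Subset.eventuallyLE
              (singleton_subset_iff.mpr (mem_Ici.mpr le_rfl))
    have h1 : Filter.Tendsto (fun x : ℝ => t * x ^ α) Filter.atTop Filter.atTop :=
      (tendsto_rpow_atTop hα).const_mul_atTop ht
    have hlim : Filter.Tendsto (fun x : ℝ => Real.exp (-(t * x ^ α))) Filter.atTop (nhds 0) :=
      Real.tendsto_exp_atBot.comp (Filter.tendsto_neg_atBot_iff.mpr h1)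
    have : (μ {(0:ℝ)}).toReal ≤ 0 :=
      ge_of_tendsto hlim (Filter.eventually_atTop.mpr ⟨0, fun x hx => hbound x hx⟩)
    linarith
  -- replace Ici by Ioi
  have hae : (Ici (0:ℝ) : Set ℝ) =ᵐ[μ] (Ioi (0:ℝ) : Set ℝ) := by
    refine MeasureTheory.ae_eq_set.mpr ⟨?_, ?_⟩
    · rw [Ici_sdiff_Ioi, Icc_self]; exact hμ0
    · rw [diff_eq_empty.mpr Ioi_subset_Ici_self]; exact measure_empty
  have hres : μ.restrict (Ici 0) = μ.restrict (Ioi 0) := Measure.restrict_congr_set hae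
  have hlap' : ∀ x : ℝ, 0 ≤ x →
      ∫ s in Ioi (0:ℝ), Real.exp (-(x * s)) ∂μ = Real.exp (-(t * x ^ α)) := by
    intro x hx; rw [← hres]; exact hlaplace x hx
  -- Claim C : inner μ-integral
  have hC : ∀ x ∈ Ioi (0:ℝ),
      ∫⁻ s in Ioi (0:ℝ), ENNReal.ofReal (x ^ (r - 1) * Real.exp (-(x * s))) ∂μ
        = ENNReal.ofReal (x ^ (r - 1) * Real.exp (-(t * x ^ α))) := by
    intro x hx
    have hx' : (0:ℝ) < x := hx
    have h1 : ∀ s : ℝ, ENNReal.ofReal (x ^ (r - 1) * Real.exp (-(x * s)))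
        = ENNReal.ofReal (x ^ (r - 1)) * ENNReal.ofReal (Real.exp (-(x * s))) :=
      fun s => ENNReal.ofReal_mul (Real.rpow_nonneg hx'.le _)
    simp_rw [h1]
    rw [lintegral_const_mul' _ _ ENNReal.ofReal_ne_top,
      ← ofReal_integral_eq_lintegral_ofReal (hint x hx'.le _ Ioi_subset_Ici_self measurableSet_Ioi)
        (Filter.Eventually.of_forall fun s => (Real.exp_pos _).le),
      hlap' x hx'.le, ← ENNReal.ofReal_mul (Real.rpow_nonneg hx'.le _)]
  -- Claim B : Gamma representation of s ^ (-r)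
  have hB : ∀ s ∈ Ioi (0:ℝ),
      ∫⁻ x in Ioi (0:ℝ), ENNReal.ofReal (x ^ (r - 1) * Real.exp (-(x * s)))
        = ENNReal.ofReal (Real.Gamma r * s ^ (-r)) := by
    intro s hs
    have hs' : (0:ℝ) < s := hs
    have hint2 : IntegrableOn (fun x : ℝ => x ^ (r - 1) * Real.exp (-s * x ^ (1:ℝ))) (Ioi 0) :=
      integrableOn_rpow_mul_exp_neg_mul_rpow (by linarith) one_pos hs'
    have hint3 : IntegrableOn (fun x : ℝ => x ^ (r - 1) * Real.exp (-(x * s))) (Ioi 0) := by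
      refine hint2.congr_fun (fun x _ => ?_) measurableSet_Ioi
      dsimp only; rw [Real.rpow_one]; ring_nf
    rw [← ofReal_integral_eq_lintegral_ofReal hint3 ?_]
    · congr 1
      have heq : ∫ x in Ioi (0:ℝ), x ^ (r - 1) * Real.exp (-(x * s))
          = ∫ x in Ioi (0:ℝ), x ^ (r - 1) * Real.exp (-(s * x)) := by
        refine setIntegral_congr_fun measurableSet_Ioi fun x _ => by rw [mul_comm x s]
      rw [heq, Real.integral_rpow_mul_exp_neg_mul_Ioi hr hs', one_div,
        Real.inv_rpow hs'.le, ← Real.rpow_neg hs'.le, mul_comm]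
    · filter_upwards [ae_restrict_mem measurableSet_Ioi] with x hx
      exact mul_nonneg (Real.rpow_nonneg (le_of_lt hx) _) (Real.exp_pos _).le
  -- Claim D : the outer volume integral
  have hintD : IntegrableOn (fun x : ℝ => x ^ (r - 1) * Real.exp (-(t * x ^ α))) (Ioi 0) := by
    have h1 : IntegrableOn (fun y : ℝ => y ^ (r / α - 1) * Real.exp (-(t * y))) (Ioi 0) := by
      have h0 : IntegrableOn (fun y : ℝ => y ^ (r / α - 1) * Real.exp (-t * y ^ (1:ℝ))) (Ioi 0) :=
        integrableOn_rpow_mul_exp_neg_mul_rpow (by linarith [div_pos hr hα]) one_pos ht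
      refine h0.congr_fun (fun y _ => ?_) measurableSet_Ioi
      dsimp only; rw [Real.rpow_one, neg_mul]
    have h2 := (integrableOn_Ioi_comp_rpow_iff'
      (fun y : ℝ => y ^ (r / α - 1) * Real.exp (-(t * y))) hα.ne').mpr h1
    refine h2.congr_fun (fun x hx => ?_) measurableSet_Ioi
    have hx' : (0:ℝ) < x := hx
    dsimp only; rw [smul_eq_mul, ← Real.rpow_mul hx'.le,
      show α * (r / α - 1) = r - α by field_simp, ← mul_assoc,
      ← Real.rpow_add hx', show α - 1 + (r - α) = r - 1 by ring]
  have hD : ∫⁻ x in Ioi (0:ℝ), ENNReal.ofReal (x ^ (r - 1) * Real.exp (-(t * x ^ α)))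
      = ENNReal.ofReal (t ^ (-(r / α)) * (1 / α) * Real.Gamma (r / α)) := by
    rw [← ofReal_integral_eq_lintegral_ofReal hintD ?_]
    · congr 1
      have h0 := integral_rpow_mul_exp_neg_mul_rpow (p := α) (q := r - 1) (b := t)
        hα (by linarith) ht
      simp_rw [neg_mul, sub_add_cancel] at h0
      rw [h0]
      congr 1
      rw [neg_div]
    · filter_upwards [ae_restrict_mem measurableSet_Ioi] with x hx
      exact mul_nonneg (Real.rpow_nonneg (le_of_lt hx) _) (Real.exp_pos _).le
  -- measurability for Tonelli
  have hmeas : Measurable fun p : ℝ × ℝ =>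
      ENNReal.ofReal (p.2 ^ (r - 1) * Real.exp (-(p.2 * p.1))) := by fun_prop
  -- key identity
  have key : ENNReal.ofReal (Real.Gamma r) * ∫⁻ s in Ioi (0:ℝ), ENNReal.ofReal (s ^ (-r)) ∂μ
      = ENNReal.ofReal (t ^ (-(r / α)) * (1 / α) * Real.Gamma (r / α)) := by
    rw [← lintegral_const_mul' _ _ ENNReal.ofReal_ne_top]
    calc ∫⁻ s in Ioi (0:ℝ), ENNReal.ofReal (Real.Gamma r) * ENNReal.ofReal (s ^ (-r)) ∂μ
        = ∫⁻ s in Ioi (0:ℝ), ∫⁻ x in Ioi (0:ℝ),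
            ENNReal.ofReal (x ^ (r - 1) * Real.exp (-(x * s))) ∂volume ∂μ := by
          refine setLIntegral_congr_fun measurableSet_Ioi (
            fun s hs => ?_)
          rw [← ENNReal.ofReal_mul hΓr.le, hB s hs]
      _ = ∫⁻ x in Ioi (0:ℝ), ∫⁻ s in Ioi (0:ℝ),
            ENNReal.ofReal (x ^ (r - 1) * Real.exp (-(x * s))) ∂μ ∂volume :=
          lintegral_lintegral_swap hmeas.aemeasurable
      _ = ∫⁻ x in Ioi (0:ℝ), ENNReal.ofReal (x ^ (r - 1) * Real.exp (-(t * x ^ α))) :=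
          setLIntegral_congr_fun measurableSet_Ioi hC
      _ = _ := hD
  have hΓne : ENNReal.ofReal (Real.Gamma r) ≠ 0 := by
    simp [ENNReal.ofReal_eq_zero, not_le, hΓr]
  have hI : ∫⁻ s in Ioi (0:ℝ), ENNReal.ofReal (s ^ (-r)) ∂μ
      = ENNReal.ofReal ((t ^ (-(r / α)) * (1 / α) * Real.Gamma (r / α)) / Real.Gamma r) := by
    rw [ENNReal.ofReal_div_of_pos hΓr]
    exact (ENNReal.eq_div_iff hΓne ENNReal.ofReal_ne_top).mpr key
  rw [hres, MeasureTheory.integral_eq_lintegral_of_nonneg_ae ?_ ?_]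
  · rw [hI, ENNReal.toReal_ofReal (by positivity)]
    field_simp
  · filter_upwards [ae_restrict_mem measurableSet_Ioi] with s hs
    exact Real.rpow_nonneg (le_of_lt hs) _
  · exact (by fun_prop : Measurable fun s : ℝ => s ^ (-r)).aestronglyMeasurable
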